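/- In the block setup on an Enriques surface, for each block i and each 1 ≤ j ≤ n_i − 1 there is a distinguished triangle L^i_{j+1} → R_{L^i_{j+1}}(L^i_j) → Q^i_{j,j+1}[-1], where R denotes right mutation and Q^i_{j,j+1} is the cokernel of the injection L^i_j ↪ L^i_{j+1}. -/

import Mathlib

/-!
STATEMENT 10: for each block `i` and `1 ≤ j ≤ n_i − 1` there is a distinguished triangle
`L^i_{j+1} → R_{L^i_{j+1}}(L^i_j) → Q^i_{j,j+1}[-1]`, where `R` is right mutation through
the exceptional object `L^i_{j+1}` and `Q^i_{j,j+1} = Coker(L^i_j ↪ L^i_{j+1})`.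

The right mutation `R_{L^i_{j+1}}(L^i_j)` is presented by its defining triangle
`R → L^i_j → L^i_{j+1} ⊗ RHom(L^i_j, L^i_{j+1})^∨`; since
`RHom(L^i_j, L^i_{j+1}) ≅ K ⊕ K[-1]`, the third term is `L^i_{j+1} ⊕ L^i_{j+1}[1]` and
the coevaluation map has components the canonical inclusion and a nonzero extension class.
-/

namespace Stmt10

open CategoryTheory Limits Pretriangulated

variable (K : Type) [Field K]
variable (C : Type) [Category C] [Preadditive C] [Linear K C]
  [HasZeroObject C] [HasShift C ℤ] [∀ n : ℤ, (shiftFunctor C n).Additive] [Pretriangulated C]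

/-- Abstract model of the bounded derived category `D^b(X)` of an Enriques surface `X`
over an algebraically closed field `K` of characteristic `≠ 2`, together with a
semiorthogonal decomposition `D^b(X) = ⟨Ku(X,L), L⟩` where `L = ⟨L₁,…,L_c⟩` consists of
pairwise completely orthogonal blocks `L_i = ⟨L^i_1,…,L^i_{n_i}⟩` of exceptional line
bundles, consecutive line bundles in a block differing by `(-2)`-curves forming an
`A`-type chain (so that `RHom(L^i_j, L^i_l) ≅ K ⊕ K[-1]` for `j < l`).  The Serre
functor satisfies `S² ≅ [4]` but `S ≇ [2]` (`ω_X` is `2`-torsion, nontrivial). -/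
structure BlockSetup where
  /-- Serre functor of `D^b(X)` -/
  S : C ⥤ C
  Sequiv : S.IsEquivalence
  duality : ∀ A B : C, (A ⟶ B) ≃ₗ[K] Module.Dual K (B ⟶ S.obj A)
  /-- Enriques condition: `S_X² ≅ [4]`, `S_X ≇ [2]` -/
  Ssq : S ⋙ S ≅ shiftFunctor C (4 : ℤ)
  Snottwo : IsEmpty (S ≅ shiftFunctor C (2 : ℤ))
  /-- all Hom spaces are finite dimensional -/
  findim : ∀ A B : C, FiniteDimensional K (A ⟶ B)
  /-- graded Hom's are bounded -/
  bdd : ∀ A B : C, (Function.support fun t : ℤ => Module.finrank K (A ⟶ B⟦t⟧)).Finite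
  /-- number of blocks and their sizes -/
  c : ℕ
  n : Fin c → ℕ
  npos : ∀ i, 0 < n i
  /-- the exceptional line bundles `L^i_j` (index `j` starting at `0`) -/
  L : (i : Fin c) → Fin (n i) → C
  /-- each `L^i_j` is exceptional -/
  exc0 : ∀ i j, Module.finrank K (L i j ⟶ L i j) = 1
  exct : ∀ i j (t : ℤ), t ≠ 0 → Module.finrank K (L i j ⟶ (L i j)⟦t⟧) = 0
  /-- `{L^i_1,…,L^i_{n_i}}` is an exceptional collection -/
  coll : ∀ i (j j' : Fin (n i)), j' < j → ∀ t : ℤ, Module.finrank K (L i j ⟶ (L i j')⟦t⟧) = 0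
  /-- `RHom(L^i_j, L^i_l) ≅ K ⊕ K[-1]` for `j < l` (the line bundles differ by an
  effective `A`-type chain of `(-2)`-curves) -/
  chain0 : ∀ i (j l : Fin (n i)), j < l → Module.finrank K (L i j ⟶ L i l) = 1
  chain1 : ∀ i (j l : Fin (n i)), j < l → Module.finrank K (L i j ⟶ (L i l)⟦(1 : ℤ)⟧) = 1
  chaint : ∀ i (j l : Fin (n i)), j < l → ∀ t : ℤ, t ≠ 0 → t ≠ 1 →
    Module.finrank K (L i j ⟶ (L i l)⟦t⟧) = 0
  /-- the blocks are completely orthogonal -/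
  orth : ∀ i i', i ≠ i' → ∀ j j' (t : ℤ), Module.finrank K (L i j ⟶ (L i' j')⟦t⟧) = 0
  /-- the canonical inclusion `L^i_j ↪ L^i_l` -/
  incl : ∀ i (j l : Fin (n i)), (L i j ⟶ L i l)
  inclnz : ∀ i (j l : Fin (n i)), j ≤ l → incl i j l ≠ 0
  /-- the torsion quotients `Q^i_{j,l} = Coker(L^i_j ↪ L^i_l)` -/
  Q : (i : Fin c) → (j l : Fin (n i)) → C
  Qmap : ∀ i (j l : Fin (n i)), (L i l ⟶ Q i j l)
  Qconn : ∀ i (j l : Fin (n i)), (Q i j l ⟶ (L i j)⟦(1 : ℤ)⟧)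
  Qtri : ∀ i (j l : Fin (n i)), j < l →
    Triangle.mk (incl i j l) (Qmap i j l) (Qconn i j l) ∈ distTriang C

variable {K C}

namespace BlockSetup

variable (St : BlockSetup K C)

/-- first line bundle `L^i_1` of the `i`-th block. -/
def L1 (i : Fin St.c) : C := St.L i ⟨0, St.npos i⟩

/-- The Kuznetsov component `Ku(X,L) = L^⊥`. -/
def Ku (F : C) : Prop :=
  ∀ (i : Fin St.c) (j : Fin (St.n i)) (t : ℤ), ∀ g : (St.L i j)⟦t⟧ ⟶ F, g = 0

/-- Membership in the subcategory `L` generated by the blocks: `L = {}^⊥(L^⊥)`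
(valid since `L` is admissible). -/
def InL (F : C) : Prop :=
  ∀ G : C, St.Ku G → ∀ (t : ℤ) (f : F ⟶ G⟦t⟧), f = 0

/-- Membership in the single block `L_i`. -/
def InBlock (i : Fin St.c) (F : C) : Prop :=
  St.InL F ∧ ∀ i', i' ≠ i → ∀ (j : Fin (St.n i')) (t : ℤ),
    (∀ f : F ⟶ (St.L i' j)⟦t⟧, f = 0) ∧ (∀ f : St.L i' j ⟶ F⟦t⟧, f = 0)

end BlockSetup

/-- The projection functor `ζ_K ∘ ζ^!_K` onto the Kuznetsov component: the right adjoint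
of the inclusion, viewed as an endofunctor of the ambient category together with the
counit, characterized by the universal property. -/
structure KuProjection (St : BlockSetup K C) where
  P : C ⥤ C
  counit : P ⟶ 𝟭 C
  inKu : ∀ X : C, St.Ku (P.obj X)
  univ : ∀ F X : C, St.Ku F →
    Function.Bijective (fun g : F ⟶ P.obj X => g ≫ counit.app X)

/-- `S_i := ζ^!_K(L^i_1)`. -/
def KuProjection.Sobj {St : BlockSetup K C} (pr : KuProjection St) (i : Fin St.c) : C :=
  pr.P.obj (St.L1 i)

/-- The Serre functor `S_L` of the admissible subcategory `L`, with quasi-inverse. -/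
structure SerreOnL (St : BlockSetup K C) where
  mem : ∀ i j, St.InL (St.L i j)
  SL : ObjectProperty.FullSubcategory St.InL ⥤ ObjectProperty.FullSubcategory St.InL
  duality : ∀ A B : ObjectProperty.FullSubcategory St.InL,
    (A.obj ⟶ B.obj) ≃ₗ[K] Module.Dual K (B.obj ⟶ (SL.obj A).obj)
  SLinv : ObjectProperty.FullSubcategory St.InL ⥤ ObjectProperty.FullSubcategory St.InL
  invl : SLinv ⋙ SL ≅ 𝟭 _
  invr : SL ⋙ SLinv ≅ 𝟭 _

/-- `S_L^{-1}(L^i_1)`, as an object of the ambient category. -/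
def SerreOnL.SLinvL1 {St : BlockSetup K C} (SD : SerreOnL St) (i : Fin St.c) : C :=
  (SD.SLinv.obj ⟨St.L1 i, SD.mem i ⟨0, St.npos i⟩⟩).obj

/-- A `3`-spherical object of `Ku(X,L)`: `RHom(F,F) ≅ K ⊕ K[-3]` and `S_{Ku}(F) ≅ F[3]`,
where `S_{Ku} = ζ^!_K ∘ S_X ∘ ζ_K`. -/
def IsThreeSpherical (St : BlockSetup K C) (pr : KuProjection St) (F : C) : Prop :=
  Module.finrank K (F ⟶ F) = 1 ∧ Module.finrank K (F ⟶ F⟦(3 : ℤ)⟧) = 1 ∧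
  (∀ t : ℤ, t ≠ 0 → t ≠ 3 → Module.finrank K (F ⟶ F⟦t⟧) = 0) ∧
  Nonempty (pr.P.obj (St.S.obj F) ≅ F⟦(3 : ℤ)⟧)

/-- A `3`-pseudoprojective object of `Ku(X,L)`:
`RHom(F,F) ≅ K ⊕ K[-1] ⊕ K[-2] ⊕ K[-3]` and `S_{Ku}(F) ≅ F[3]`. -/
def IsThreePseudoprojective (St : BlockSetup K C) (pr : KuProjection St) (F : C) : Prop :=
  (∀ t : ℤ, 0 ≤ t → t ≤ 3 → Module.finrank K (F ⟶ F⟦t⟧) = 1) ∧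
  (∀ t : ℤ, t < 0 ∨ 3 < t → Module.finrank K (F ⟶ F⟦t⟧) = 0) ∧
  Nonempty (pr.P.obj (St.S.obj F) ≅ F⟦(3 : ℤ)⟧)

/-- Euler pairing `χ(E,F) = Σ_t (-1)^t dim Hom(E, F[t])`. -/
noncomputable def chi (E F : C) : ℤ :=
  ∑ᶠ t : ℤ, ((-1 : ℤ) ^ t.natAbs) * (Module.finrank K (E ⟶ F⟦t⟧) : ℤ)


section AuxLemmas

/-- In a one-dimensional vector space, every vector is a scalar multiple of any
nonzero vector. -/
lemma span_smul_aux {V : Type*} [AddCommGroup V] [Module K V] [FiniteDimensional K V]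
    (h : Module.finrank K V = 1) {v : V} (hv : v ≠ 0) (u : V) : ∃ μ : K, u = μ • v := by
  have hsp : Submodule.span K ({v} : Set V) = ⊤ := by
    apply Submodule.eq_top_of_finrank_eq
    rw [finrank_span_singleton hv, h]
  have hu : u ∈ Submodule.span K ({v} : Set V) := by rw [hsp]; trivial
  obtain ⟨μ, hμ⟩ := Submodule.mem_span_singleton.mp hu
  exact ⟨μ, hμ.symm⟩

/-- If all maps `X ⟶ Y⟦-n⟧` vanish, then all maps `X⟦n⟧ ⟶ Y` vanish. -/
lemma shift_hom_zero {X Y : C} (n : ℤ) (h : ∀ g : X ⟶ Y⟦(-n : ℤ)⟧, g = 0)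
    (s : X⟦n⟧ ⟶ Y) : s = 0 := by
  apply (shiftFunctor C (-n)).map_injective
  have h1 : (shiftEquiv C n).unitIso.hom.app X ≫ (shiftFunctor C (-n)).map s = 0 := h _
  have h2 : (shiftFunctor C (-n)).map s
      = (shiftEquiv C n).unitIso.inv.app X ≫
        ((shiftEquiv C n).unitIso.hom.app X ≫ (shiftFunctor C (-n)).map s) := by
    exact (Iso.inv_hom_id_app_assoc (shiftEquiv C n).unitIso X _).symm
  rw [Functor.map_zero, h2, h1, comp_zero]
  exact rfl

/-- The key abstract lemma: given the defining triangle of the right mutation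
`R = R_B(A)` of an exceptional pair `(A, B)` with `RHom(A,B) ≅ K ⊕ K[-1]`, and the
triangle `A → B → Q`, there is a distinguished triangle `B → R → Q⟦-1⟧ → B⟦1⟧`. -/
lemma mutation_aux [HasBinaryBiproducts C]
    (A B Q R : C)
    [FiniteDimensional K (A ⟶ A)] [FiniteDimensional K (A ⟶ B⟦(1 : ℤ)⟧)]
    (hAA : Module.finrank K (A ⟶ A) = 1)
    (hAB1 : Module.finrank K (A ⟶ B⟦(1 : ℤ)⟧) = 1)
    (hABneg : ∀ g : A ⟶ B⟦(-1 : ℤ)⟧, g = 0)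
    (hBAneg : ∀ g : B ⟶ A⟦(-1 : ℤ)⟧, g = 0)
    (hBBneg2 : ∀ g : B ⟶ (B⟦(-1 : ℤ)⟧)⟦(-1 : ℤ)⟧, g = 0)
    (incl : A ⟶ B) (hincl : incl ≠ 0)
    (q : B ⟶ Q) (δ : Q ⟶ A⟦(1 : ℤ)⟧)
    (hT2 : Triangle.mk incl q δ ∈ distTriang C)
    (ε : A ⟶ B⟦(1 : ℤ)⟧) (hε : ε ≠ 0)
    (r : R ⟶ A) (conn : B ⊞ B⟦(1 : ℤ)⟧ ⟶ R⟦(1 : ℤ)⟧)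
    (hT : Triangle.mk r (biprod.lift incl ε) conn ∈ distTriang C) :
    ∃ (a : B ⟶ R) (b : R ⟶ Q⟦(-1 : ℤ)⟧) (h : Q⟦(-1 : ℤ)⟧ ⟶ B⟦(1 : ℤ)⟧),
      Triangle.mk a b h ∈ distTriang C := by
  have hIdA : (𝟙 A : A ⟶ A) ≠ 0 := fun h0 =>
    hincl (by rw [← Category.id_comp incl, h0, zero_comp])
  -- the map `a' : B⟦1⟧ → R⟦1⟧` (the shift of the first map of the desired triangle)
  set a' : B⟦(1 : ℤ)⟧ ⟶ R⟦(1 : ℤ)⟧ := biprod.inr ≫ conn with ha'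
  obtain ⟨Z, p, w, hTz⟩ := Pretriangulated.distinguished_cocone_triangle a'
  -- basic vanishing compositions
  have hrf : r ≫ biprod.lift incl ε = 0 := comp_distTriang_mor_zero₁₂ _ hT
  have hfc : biprod.lift incl ε ≫ conn = 0 := comp_distTriang_mor_zero₂₃ _ hT
  have ha'p : a' ≫ p = 0 := comp_distTriang_mor_zero₁₂ _ hTz
  have hwa' : w ≫ (shiftFunctor C (1 : ℤ)).map a' = 0 := comp_distTriang_mor_zero₃₁ _ hTz
  have hqd0 : δ ≫ (shiftFunctor C (1 : ℤ)).map incl = 0 := comp_distTriang_mor_zero₃₁ _ hT2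
  have hicp : biprod.inr ≫ conn ≫ p = 0 := by
    rw [← Category.assoc, ← ha', ha'p]
  have hdec : biprod.lift incl ε = incl ≫ biprod.inl + ε ≫ biprod.inr := by
    have h1 : (biprod.lift incl ε) ≫ biprod.fst
        = (incl ≫ biprod.inl + ε ≫ biprod.inr) ≫ biprod.fst := by simp
    have h2 : (biprod.lift incl ε) ≫ biprod.snd
        = (incl ≫ biprod.inl + ε ≫ biprod.inr) ≫ biprod.snd := by simp
    exact biprod.hom_ext _ _ h1 h2
  -- `ε ≫ a' ≠ 0`
  have hεa : ε ≫ a' ≠ 0 := by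
    intro h0
    obtain ⟨v, hv⟩ : ∃ v : A ⟶ A, ε ≫ (biprod.inr : B⟦(1 : ℤ)⟧ ⟶ B ⊞ B⟦(1 : ℤ)⟧) = v ≫ biprod.lift incl ε :=
      Triangle.coyoneda_exact₃ _ hT (ε ≫ biprod.inr)
      (by exact (Category.assoc _ _ _).trans h0)
    obtain ⟨μ, hμ⟩ := span_smul_aux hAA hIdA v
    have h1 : μ • incl = 0 := by
      have h2 := congrArg (fun x => x ≫ biprod.fst) hv
      simp only [Category.assoc, biprod.inr_fst, comp_zero, biprod.lift_fst, hμ,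
        Linear.smul_comp, Category.id_comp] at h2
      exact h2.symm
    have hμ0 : μ = 0 := by
      rcases smul_eq_zero.mp h1 with h | h
      · exact h
      · exact absurd h hincl
    have hv0 : ε ≫ (biprod.inr : _ ⟶ B ⊞ B⟦(1 : ℤ)⟧) = 0 := by
      rw [hv, hμ, hμ0, zero_smul, zero_comp]
    apply hε
    have h3 := congrArg (fun x => x ≫ biprod.snd) hv0
    simpa using h3
  -- the map `ψ : R⟦1⟧ → Q`
  obtain ⟨ψ, hψ1, -⟩ := Pretriangulated.complete_distinguished_triangle_morphism
    (Triangle.mk r (biprod.lift incl ε) conn).rotate (Triangle.mk incl q δ)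
    (rot_of_distTriang _ hT) hT2 (𝟙 A) biprod.fst (by exact (biprod.lift_fst _ _).trans (Category.id_comp _).symm)
  let ψ' : (shiftFunctor C (1 : ℤ)).obj R ⟶ Q := ψ
  have hψ : conn ≫ ψ' = biprod.fst ≫ q := by exact hψ1
  -- the map `φ : Z → Q`
  have ha'ψ : a' ≫ ψ' = 0 := by
    rw [ha', Category.assoc, hψ, ← Category.assoc, biprod.inr_fst, zero_comp]
  obtain ⟨φ₀, hφ₀⟩ := Triangle.yoneda_exact₂ _ hTz ψ' ha'ψ
  simp only [Triangle.mk_mor₂] at hφ₀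
  let φ : Z ⟶ Q := φ₀
  have hφ : ψ' = p ≫ φ := hφ₀
  -- the map `χ : Q → Z`
  have hg0 : incl ≫ biprod.inl ≫ conn ≫ p = 0 := by
    have hkey : (incl ≫ biprod.inl) ≫ conn + (ε ≫ biprod.inr) ≫ conn = 0 := by
      rw [← Preadditive.add_comp, ← hdec, hfc]
    have h2 : (incl ≫ biprod.inl) ≫ conn = -((ε ≫ biprod.inr) ≫ conn) := by
      exact eq_neg_of_add_eq_zero_left hkey
    calc incl ≫ biprod.inl ≫ conn ≫ p
        = ((incl ≫ biprod.inl) ≫ conn) ≫ p := by simp only [Category.assoc]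
      _ = -(((ε ≫ biprod.inr) ≫ conn) ≫ p) := by rw [h2, Preadditive.neg_comp]
      _ = 0 := by
          simp only [Category.assoc]
          rw [hicp, comp_zero, neg_zero]
  obtain ⟨χ₀, hχ₀⟩ := Triangle.yoneda_exact₂ _ hT2 (biprod.inl ≫ conn ≫ p) hg0
  simp only [Triangle.mk_mor₂] at hχ₀
  let χ : Q ⟶ Z := χ₀
  have hχ : biprod.inl ≫ conn ≫ p = q ≫ χ := hχ₀
  -- Hom-vanishing between the generators
  have hA1B : ∀ g : A⟦(1 : ℤ)⟧ ⟶ B, g = 0 := fun g => shift_hom_zero 1 hABneg g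
  have hB1A : ∀ g : B⟦(1 : ℤ)⟧ ⟶ A, g = 0 := fun g => shift_hom_zero 1 hBAneg g
  have hB1Bneg : ∀ g : B⟦(1 : ℤ)⟧ ⟶ B⟦(-1 : ℤ)⟧, g = 0 := fun g =>
    shift_hom_zero 1 hBBneg2 g
  have hB2B : ∀ g : (B⟦(1 : ℤ)⟧)⟦(1 : ℤ)⟧ ⟶ B, g = 0 := fun g =>
    shift_hom_zero 1 hB1Bneg g
  -- vanishing of `Hom(A⟦1⟧, Z)`
  have homA1Z : ∀ m : A⟦(1 : ℤ)⟧ ⟶ Z, m = 0 := by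
    intro m
    have hmw : m ≫ w = 0 := by
      obtain ⟨v, hv⟩ := (shiftFunctor C (1 : ℤ)).map_surjective (m ≫ w)
      have hva' : v ≫ a' = 0 := by
        apply (shiftFunctor C (1 : ℤ)).map_injective
        rw [Functor.map_comp, hv, Category.assoc, hwa', comp_zero, Functor.map_zero]
      obtain ⟨μ, hμ⟩ := span_smul_aux hAB1 hε v
      have h1 : μ • (ε ≫ a') = 0 := by rw [← Linear.smul_comp, ← hμ, hva']
      have hμ0 : μ = 0 := by
        rcases smul_eq_zero.mp h1 with h | h
        · exact h
        · exact absurd h hεa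
      rw [← hv, hμ, hμ0, zero_smul, Functor.map_zero]
    obtain ⟨n, hn⟩ : ∃ n : A⟦(1 : ℤ)⟧ ⟶ R⟦(1 : ℤ)⟧, m = n ≫ p :=
      Triangle.coyoneda_exact₃ _ hTz m hmw
    obtain ⟨n₀, hn₀⟩ := (shiftFunctor C (1 : ℤ)).map_surjective n
    have hn₀r : n₀ ≫ r = 0 := by
      obtain ⟨μ, hμ⟩ := span_smul_aux hAA hIdA (n₀ ≫ r)
      have h2 : (n₀ ≫ r) ≫ biprod.lift incl ε = 0 := by
        rw [Category.assoc, hrf, comp_zero]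
      rw [hμ] at h2
      have h3 : μ • incl = 0 := by
        have h4 := congrArg (fun x => x ≫ biprod.fst) h2
        simpa [Linear.smul_comp] using h4
      have hμ0 : μ = 0 := by
        rcases smul_eq_zero.mp h3 with h | h
        · exact h
        · exact absurd h hincl
      rw [hμ, hμ0, zero_smul]
    have hnr : n ≫ (shiftFunctor C (1 : ℤ)).map r = 0 := by
      rw [← hn₀, ← Functor.map_comp, hn₀r, Functor.map_zero]
    obtain ⟨n', hn'⟩ : ∃ n' : A⟦(1 : ℤ)⟧ ⟶ B ⊞ B⟦(1 : ℤ)⟧, n = n' ≫ conn :=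
      Triangle.coyoneda_exact₁ _ hT n hnr
    have hfst : n' ≫ biprod.fst = 0 := hA1B _
    have hdecn : n' = (n' ≫ biprod.fst) ≫ biprod.inl + (n' ≫ biprod.snd) ≫ biprod.inr := by
      rw [Category.assoc, Category.assoc, ← Preadditive.comp_add, biprod.total]
      exact (Category.comp_id n').symm
    have hm2 : m = n' ≫ (conn ≫ p) := by rw [hn, hn', Category.assoc]
    rw [hm2, hdecn, Preadditive.add_comp, hfst]
    simp [hicp]
  -- vanishing of `Hom(B⟦1⟧⟦1⟧, Z)`
  have homB2Z : ∀ s : (B⟦(1 : ℤ)⟧)⟦(1 : ℤ)⟧ ⟶ Z, s = 0 := by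
    intro s
    have hsw : s ≫ w = 0 := by
      obtain ⟨t, ht⟩ := (shiftFunctor C (1 : ℤ)).map_surjective (s ≫ w)
      have hta' : t ≫ a' = 0 := by
        apply (shiftFunctor C (1 : ℤ)).map_injective
        rw [Functor.map_comp, ht, Category.assoc, hwa', comp_zero, Functor.map_zero]
      have ht0 : t = 0 := by
        obtain ⟨v, hv⟩ : ∃ v : B⟦(1 : ℤ)⟧ ⟶ A,
            t ≫ (biprod.inr : B⟦(1 : ℤ)⟧ ⟶ B ⊞ B⟦(1 : ℤ)⟧) = v ≫ biprod.lift incl ε :=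
          Triangle.coyoneda_exact₃ _ hT (t ≫ biprod.inr)
          (by exact (Category.assoc _ _ _).trans hta')
        rw [hB1A v, zero_comp] at hv
        have h5 := congrArg (fun x => x ≫ biprod.snd) hv
        simpa using h5
      rw [← ht, ht0, Functor.map_zero]
    obtain ⟨n, hn⟩ : ∃ n : (B⟦(1 : ℤ)⟧)⟦(1 : ℤ)⟧ ⟶ R⟦(1 : ℤ)⟧, s = n ≫ p :=
      Triangle.coyoneda_exact₃ _ hTz s hsw
    have hnr : n ≫ (shiftFunctor C (1 : ℤ)).map r = 0 := by
      obtain ⟨v, hv⟩ := (shiftFunctor C (1 : ℤ)).map_surjective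
        (n ≫ (shiftFunctor C (1 : ℤ)).map r)
      rw [← hv, hB1A v, Functor.map_zero]
    obtain ⟨n', hn'⟩ : ∃ n' : (B⟦(1 : ℤ)⟧)⟦(1 : ℤ)⟧ ⟶ B ⊞ B⟦(1 : ℤ)⟧, n = n' ≫ conn :=
      Triangle.coyoneda_exact₁ _ hT n hnr
    have hfst : n' ≫ biprod.fst = 0 := hB2B _
    have hdecn : n' = (n' ≫ biprod.fst) ≫ biprod.inl + (n' ≫ biprod.snd) ≫ biprod.inr := by
      rw [Category.assoc, Category.assoc, ← Preadditive.comp_add, biprod.total]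
      exact (Category.comp_id n').symm
    have hs2 : s = n' ≫ (conn ≫ p) := by rw [hn, hn', Category.assoc]
    rw [hs2, hdecn, Preadditive.add_comp, hfst]
    simp [hicp]
  -- first identity : `χ ≫ φ = 𝟙 Q`
  have hq1 : q ≫ (χ ≫ φ) = q := by
    calc q ≫ (χ ≫ φ) = (biprod.inl ≫ conn ≫ p) ≫ φ := by
          rw [← Category.assoc, ← hχ]
      _ = biprod.inl ≫ conn ≫ ψ' := by rw [hφ]; simp only [Category.assoc]
      _ = biprod.inl ≫ biprod.fst ≫ q := by rw [hψ]
      _ = q := by rw [← Category.assoc, biprod.inl_fst, Category.id_comp]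
  have homA1Q : ∀ u : A⟦(1 : ℤ)⟧ ⟶ Q, u = 0 := by
    intro u
    have huδ : u ≫ δ = 0 := by
      obtain ⟨v, hv⟩ := (shiftFunctor C (1 : ℤ)).map_surjective (u ≫ δ)
      have hvincl : v ≫ incl = 0 := by
        apply (shiftFunctor C (1 : ℤ)).map_injective
        rw [Functor.map_comp, hv, Category.assoc, hqd0, comp_zero, Functor.map_zero]
      obtain ⟨μ, hμ⟩ := span_smul_aux hAA hIdA v
      rw [hμ, Linear.smul_comp, Category.id_comp] at hvincl
      have hμ0 : μ = 0 := by
        rcases smul_eq_zero.mp hvincl with h | h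
        · exact h
        · exact absurd h hincl
      rw [← hv, hμ, hμ0, zero_smul, Functor.map_zero]
    obtain ⟨s, hs⟩ : ∃ s : A⟦(1 : ℤ)⟧ ⟶ B, u = s ≫ q := Triangle.coyoneda_exact₃ _ hT2 u huδ
    rw [hs, hA1B s, zero_comp]
  have hid1 : χ ≫ φ = 𝟙 Q := by
    have hqd : q ≫ (χ ≫ φ - 𝟙 Q) = 0 := by
      rw [Preadditive.comp_sub, hq1, Category.comp_id, sub_self]
    obtain ⟨u, hu⟩ : ∃ u : A⟦(1 : ℤ)⟧ ⟶ Q, χ ≫ φ - 𝟙 Q = δ ≫ u :=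
      Triangle.yoneda_exact₃ _ hT2 (χ ≫ φ - 𝟙 Q) hqd
    rw [homA1Q u, comp_zero] at hu
    exact sub_eq_zero.mp hu
  -- second identity : `φ ≫ χ = 𝟙 Z`
  have hψχ : ψ' ≫ χ = p := by
    have h1 : conn ≫ ψ' ≫ χ
        = ((biprod.fst : B ⊞ B⟦(1 : ℤ)⟧ ⟶ _) ≫ biprod.inl) ≫ (conn ≫ p) := by
      rw [← Category.assoc, hψ, Category.assoc, ← hχ, ← Category.assoc]
    have htot : ((biprod.fst : B ⊞ B⟦(1 : ℤ)⟧ ⟶ _) ≫ biprod.inl) ≫ (conn ≫ p)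
        + ((biprod.snd : B ⊞ B⟦(1 : ℤ)⟧ ⟶ _) ≫ biprod.inr) ≫ (conn ≫ p) = conn ≫ p := by
      rw [← Preadditive.add_comp, biprod.total]
      exact Category.id_comp _
    have hsnd : ((biprod.snd : B ⊞ B⟦(1 : ℤ)⟧ ⟶ _) ≫ biprod.inr) ≫ (conn ≫ p) = 0 := by
      rw [Category.assoc, hicp, comp_zero]
    have h3 : ((biprod.fst : B ⊞ B⟦(1 : ℤ)⟧ ⟶ _) ≫ biprod.inl) ≫ (conn ≫ p) = conn ≫ p := by
      rw [hsnd, add_zero] at htot; exact htot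
    have hc0 : conn ≫ (ψ' ≫ χ - p) = 0 := by
      rw [Preadditive.comp_sub, h1, h3, sub_self]
    obtain ⟨u, hu⟩ : ∃ u : A⟦(1 : ℤ)⟧ ⟶ Z, ψ' ≫ χ - p = (-(shiftFunctor C (1 : ℤ)).map r) ≫ u :=
      Triangle.yoneda_exact₃ _ (rot_of_distTriang _ hT) (ψ' ≫ χ - p) hc0
    rw [homA1Z u, comp_zero] at hu
    exact sub_eq_zero.mp hu
  have hid2 : φ ≫ χ = 𝟙 Z := by
    have hp0 : p ≫ (φ ≫ χ - 𝟙 Z) = 0 := by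
      rw [Preadditive.comp_sub, Category.comp_id, ← Category.assoc, ← hφ, hψχ, sub_self]
    obtain ⟨u, hu⟩ : ∃ u : (B⟦(1 : ℤ)⟧)⟦(1 : ℤ)⟧ ⟶ Z, φ ≫ χ - 𝟙 Z = w ≫ u :=
      Triangle.yoneda_exact₃ _ hTz (φ ≫ χ - 𝟙 Z) hp0
    rw [homB2Z u, comp_zero] at hu
    exact sub_eq_zero.mp hu
  -- replace `Z` by `Q` in the cone triangle of `a'`
  have hT5 : Triangle.mk a' (p ≫ φ) (χ ≫ w) ∈ distTriang C := by
    refine Pretriangulated.isomorphic_distinguished _ hTz _ ?_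
    exact Triangle.isoMk _ _ (Iso.refl _) (Iso.refl _) ⟨χ, φ, hid1, hid2⟩
      (by exact (Category.comp_id _).trans (Category.id_comp _).symm)
      (by exact (Category.assoc _ _ _).trans ((congrArg (p ≫ ·) hid2).trans
        ((Category.comp_id p).trans (Category.id_comp p).symm)))
      (by exact ((congrArg ((χ ≫ w) ≫ ·) ((shiftFunctor C (1 : ℤ)).map_id _)).trans
        (Category.comp_id _)))
  -- unshift : triple inverse rotation
  have hT6 := inv_rot_of_distTriang _ (inv_rot_of_distTriang _
    (inv_rot_of_distTriang _ hT5))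
  set T6 := ((Triangle.mk a' (p ≫ φ) (χ ≫ w)).invRotate.invRotate.invRotate) with hT6def
  let eB := (shiftEquiv C (1 : ℤ)).unitIso.app B
  let eR := (shiftEquiv C (1 : ℤ)).unitIso.app R
  refine ⟨eB.hom ≫ T6.mor₁ ≫ eR.inv, eR.hom ≫ T6.mor₂,
    T6.mor₃ ≫ (shiftFunctor C (1 : ℤ)).map eB.inv, ?_⟩
  refine Pretriangulated.isomorphic_distinguished _ hT6 _ ?_
  refine Triangle.isoMk _ _ eB eR (Iso.refl _) ?_ ?_ ?_
  · show (eB.hom ≫ T6.mor₁ ≫ eR.inv) ≫ eR.hom = eB.hom ≫ T6.mor₁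
    exact (Category.assoc _ _ _).trans (congrArg (eB.hom ≫ ·) ((Category.assoc _ _ _).trans
      ((congrArg (T6.mor₁ ≫ ·) eR.inv_hom_id).trans (Category.comp_id _))))
  · show (eR.hom ≫ T6.mor₂) ≫ (Iso.refl ((Triangle.mk (eB.hom ≫ T6.mor₁ ≫ eR.inv)
        (eR.hom ≫ T6.mor₂) (T6.mor₃ ≫ (shiftFunctor C (1 : ℤ)).map eB.inv)).obj₃)).hom
      = eR.hom ≫ T6.mor₂
    rw [Iso.refl_hom]
    exact Category.comp_id _
  · show (T6.mor₃ ≫ (shiftFunctor C (1 : ℤ)).map eB.inv) ≫ (shiftFunctor C (1 : ℤ)).map eB.hom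
      = (Iso.refl ((Triangle.mk (eB.hom ≫ T6.mor₁ ≫ eR.inv)
        (eR.hom ≫ T6.mor₂) (T6.mor₃ ≫ (shiftFunctor C (1 : ℤ)).map eB.inv)).obj₃)).hom ≫ T6.mor₃
    exact ((Category.assoc _ _ _).trans ((congrArg (T6.mor₃ ≫ ·)
      (((shiftFunctor C (1 : ℤ)).map_comp _ _).symm.trans
        ((congrArg (shiftFunctor C (1 : ℤ)).map eB.inv_hom_id).trans
          ((shiftFunctor C (1 : ℤ)).map_id _)))).trans (Category.comp_id _))).trans
      (Category.id_comp _).symm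

end AuxLemmas

theorem right_mutation_triangle [HasBinaryBiproducts C]
    (St : BlockSetup K C) (i : Fin St.c) (j : ℕ) (hj : j + 1 < St.n i) :
    -- indices `j` and `j+1` in the `i`-th block
    let j₀ : Fin (St.n i) := ⟨j, Nat.lt_of_succ_lt hj⟩
    let j₁ : Fin (St.n i) := ⟨j + 1, hj⟩
    -- the right mutation `R := R_{L^i_{j+1}}(L^i_j)`, given by its defining triangle
    ∀ (R : C) (r : R ⟶ St.L i j₀) (ε : St.L i j₀ ⟶ (St.L i j₁)⟦(1 : ℤ)⟧) (hε : ε ≠ 0)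
      (conn : St.L i j₁ ⊞ (St.L i j₁)⟦(1 : ℤ)⟧ ⟶ R⟦(1 : ℤ)⟧),
      (Triangle.mk r (biprod.lift (St.incl i j₀ j₁) ε) conn ∈ distTriang C) →
      -- conclusion: a distinguished triangle `L^i_{j+1} → R → Q^i_{j,j+1}[-1]`
      ∃ (a : St.L i j₁ ⟶ R) (b : R ⟶ (St.Q i j₀ j₁)⟦(-1 : ℤ)⟧)
        (h : (St.Q i j₀ j₁)⟦(-1 : ℤ)⟧ ⟶ (St.L i j₁)⟦(1 : ℤ)⟧),
        Triangle.mk a b h ∈ distTriang C := by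
  intro j₀ j₁ R r ε hε conn hT
  have hlt : j₀ < j₁ := Fin.mk_lt_mk.mpr (Nat.lt_succ_self j)
  haveI := St.findim (St.L i j₀) (St.L i j₀)
  haveI := St.findim (St.L i j₀) ((St.L i j₁)⟦(1 : ℤ)⟧)
  have hzero : ∀ (X Y : C), Module.finrank K (X ⟶ Y) = 0 → ∀ g : X ⟶ Y, g = 0 := by
    intro X Y h g
    haveI := St.findim X Y
    haveI : Subsingleton (X ⟶ Y) := Module.finrank_zero_iff.mp h
    exact Subsingleton.elim g 0
  refine mutation_aux (St.L i j₀) (St.L i j₁) (St.Q i j₀ j₁) R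
    (St.exc0 i j₀) (St.chain1 i j₀ j₁ hlt)
    (hzero _ _ (St.chaint i j₀ j₁ hlt (-1) (by norm_num) (by norm_num)))
    (hzero _ _ (St.coll i j₁ j₀ hlt (-1)))
    ?_
    (St.incl i j₀ j₁) (St.inclnz i j₀ j₁ hlt.le)
    (St.Qmap i j₀ j₁) (St.Qconn i j₀ j₁) (St.Qtri i j₀ j₁ hlt)
    ε hε r conn hT
  intro g
  have e := (shiftFunctorAdd' C (-1 : ℤ) (-1 : ℤ) (-2 : ℤ) (by norm_num)).app (St.L i j₁)
  have h0 : g ≫ e.inv = 0 := hzero _ _ (St.exct i j₁ (-2) (by norm_num)) _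
  calc g = (g ≫ e.inv) ≫ e.hom := by
        rw [Category.assoc, e.inv_hom_id]
        exact (Category.comp_id g).symm
    _ = 0 := by rw [h0, zero_comp]

end Stmt10
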